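/- Let a > 0, 0 < ν < 1, α₀ > 0, p* ≥ 0, Ste > 0, and α, β > 0. Set c = (1+α)/(a·(1+2β)), and define for ξ ≥ α₀ the function φ̃_c(ξ) = (a·α₀^ν·Ste/2)·exp(−((1+α)/(a·(1+β)))·(ξ² − α₀²)) / [1 + (α₀^ν·p*/(2·(1+β)))·exp(c·α₀²)·c^{(ν−1)/2}·(γ((1−ν)/2, c·ξ²) − γ((1−ν)/2, c·α₀²))], where γ(s,x) = ∫₀ˣ t^{s−1} e^{−t} dt is the lower incomplete gamma function. Then φ̃_c is strictly decreasing on [α₀, ∞) with φ̃_c(ξ) → 0 as ξ → +∞; moreover, if a·Ste > 2·α₀ then the equation φ̃_c(ξ) = ξ^{ν+1} has exactly one solution ξ ∈ (α₀, ∞). -/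

import Mathlib

open Real Set Filter MeasureTheory

/-- Lower incomplete gamma function `γ(s,x) = ∫₀ˣ t^{s−1} e^{−t} dt`. -/
noncomputable def lowerGamma (s x : ℝ) : ℝ :=
  ∫ t in (0 : ℝ)..x, t ^ (s - 1) * Real.exp (-t)

/-- The free-boundary function `φ̃_c` for linear thermal coefficients and
convective boundary condition, where `c = (1+α)/(a·(1+2β))`. -/
noncomputable def phitc (a ν α₀ p Ste alpha beta ξ : ℝ) : ℝ :=
  (a * α₀ ^ ν * Ste / 2) *
      Real.exp (-((1 + alpha) / (a * (1 + beta))) * (ξ ^ 2 - α₀ ^ 2)) /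
    (1 + (α₀ ^ ν * p / (2 * (1 + beta))) *
        Real.exp (((1 + alpha) / (a * (1 + 2 * beta))) * α₀ ^ 2) *
        ((1 + alpha) / (a * (1 + 2 * beta))) ^ ((ν - 1) / 2) *
        (lowerGamma ((1 - ν) / 2) (((1 + alpha) / (a * (1 + 2 * beta))) * ξ ^ 2) -
          lowerGamma ((1 - ν) / 2) (((1 + alpha) / (a * (1 + 2 * beta))) * α₀ ^ 2)))

lemma lg_int (s : ℝ) (hs : 0 < s) (X : ℝ) :
    IntegrableOn (fun t : ℝ => t ^ (s - 1) * Real.exp (-t)) (Ioc 0 X) := by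
  have h2 : IntegrableOn (fun t : ℝ => Real.exp (-t) * t ^ (s - 1)) (Ioc 0 X) :=
    (Real.GammaIntegral_convergent hs).mono_set Ioc_subset_Ioi_self
  exact h2.congr_fun (fun t _ => mul_comm _ _) measurableSet_Ioc

lemma lg_ii (s : ℝ) (hs : 0 < s) {x y : ℝ} (hx : 0 ≤ x) (hxy : x ≤ y) :
    IntervalIntegrable (fun t : ℝ => t ^ (s - 1) * Real.exp (-t)) volume x y := by
  rw [intervalIntegrable_iff, uIoc_of_le hxy]
  exact (lg_int s hs y).mono_set (Ioc_subset_Ioc_left hx)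

lemma lowerGamma_add (s : ℝ) (hs : 0 < s) {x y : ℝ} (hx : 0 ≤ x) (hxy : x ≤ y) :
    lowerGamma s y = lowerGamma s x + ∫ t in x..y, t ^ (s - 1) * Real.exp (-t) :=
  (intervalIntegral.integral_add_adjacent_intervals (lg_ii s hs le_rfl hx)
    (lg_ii s hs hx hxy)).symm

lemma lowerGamma_mono (s : ℝ) (hs : 0 < s) {x y : ℝ} (hx : 0 ≤ x) (hxy : x ≤ y) :
    lowerGamma s x ≤ lowerGamma s y := by
  rw [lowerGamma_add s hs hx hxy]
  have h : 0 ≤ ∫ t in x..y, t ^ (s - 1) * Real.exp (-t) :=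
    intervalIntegral.integral_nonneg hxy
      (fun t ht => mul_nonneg (Real.rpow_nonneg (hx.trans ht.1) _) (Real.exp_pos _).le)
  linarith

lemma lowerGamma_contOn (s : ℝ) (hs : 0 < s) (X : ℝ) :
    ContinuousOn (lowerGamma s) (Icc 0 X) := by
  have h : IntegrableOn (fun t : ℝ => t ^ (s - 1) * Real.exp (-t)) (Icc 0 X) := by
    rw [integrableOn_Icc_iff_integrableOn_Ioc]
    exact lg_int s hs X
  refine (intervalIntegral.continuousOn_primitive h).congr fun x hx => ?_
  rw [lowerGamma, intervalIntegral.integral_of_le hx.1]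

/-- Generic version for `φ(ξ) = A·exp(−K(ξ²−α₀²)) / (1 + M·(γ(s,cξ²) − γ(s,cα₀²)))`. -/
lemma aux_main (A K M c s α₀ q : ℝ) (hA : 0 < A) (hK : 0 < K) (hM : 0 ≤ M)
    (hc : 0 < c) (hs : 0 < s) (hα₀ : 0 < α₀) (hq : 0 < q) :
    StrictAntiOn (fun ξ : ℝ => A * Real.exp (-K * (ξ ^ 2 - α₀ ^ 2)) /
        (1 + M * (lowerGamma s (c * ξ ^ 2) - lowerGamma s (c * α₀ ^ 2)))) (Ici α₀) ∧
    Tendsto (fun ξ : ℝ => A * Real.exp (-K * (ξ ^ 2 - α₀ ^ 2)) /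
        (1 + M * (lowerGamma s (c * ξ ^ 2) - lowerGamma s (c * α₀ ^ 2)))) atTop (nhds 0) ∧
    (α₀ ^ q < A →
      ∃! ξ : ℝ, ξ ∈ Ioi α₀ ∧ A * Real.exp (-K * (ξ ^ 2 - α₀ ^ 2)) /
        (1 + M * (lowerGamma s (c * ξ ^ 2) - lowerGamma s (c * α₀ ^ 2))) = ξ ^ q) := by
  set φ : ℝ → ℝ := fun ξ => A * Real.exp (-K * (ξ ^ 2 - α₀ ^ 2)) /
      (1 + M * (lowerGamma s (c * ξ ^ 2) - lowerGamma s (c * α₀ ^ 2))) with hφ_def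
  set D : ℝ → ℝ := fun ξ => 1 + M * (lowerGamma s (c * ξ ^ 2) - lowerGamma s (c * α₀ ^ 2))
    with hD_def
  have hsq : ∀ {x y : ℝ}, α₀ ≤ x → x ≤ y → c * x ^ 2 ≤ c * y ^ 2 := by
    intro x y hx hxy
    have : x ^ 2 ≤ y ^ 2 := by nlinarith
    nlinarith
  have hDmono : ∀ {x y : ℝ}, α₀ ≤ x → x ≤ y → D x ≤ D y := by
    intro x y hx hxy
    have h := lowerGamma_mono s hs (by positivity : (0:ℝ) ≤ c * x ^ 2) (hsq hx hxy)
    have h2 := lowerGamma_mono s hs (by positivity : (0:ℝ) ≤ c * α₀ ^ 2) (hsq le_rfl hx)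
    simp only [hD_def]
    nlinarith
  have hD1 : ∀ {ξ : ℝ}, α₀ ≤ ξ → 1 ≤ D ξ := by
    intro ξ hξ
    have h := lowerGamma_mono s hs (by positivity : (0:ℝ) ≤ c * α₀ ^ 2) (hsq le_rfl hξ)
    simp only [hD_def]
    nlinarith
  -- Part 1: strict antitonicity
  have hanti : StrictAntiOn φ (Ici α₀) := by
    intro x hx y hy hxy
    have hx' : α₀ ≤ x := hx
    have hNlt : Real.exp (-K * (y ^ 2 - α₀ ^ 2)) < Real.exp (-K * (x ^ 2 - α₀ ^ 2)) := by
      apply Real.exp_lt_exp.2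
      have : x ^ 2 < y ^ 2 := by nlinarith
      nlinarith
    have hDx : (1:ℝ) ≤ D x := hD1 hx'
    have hDy : D x ≤ D y := hDmono hx' hxy.le
    show A * Real.exp (-K * (y ^ 2 - α₀ ^ 2)) / D y < A * Real.exp (-K * (x ^ 2 - α₀ ^ 2)) / D x
    calc A * Real.exp (-K * (y ^ 2 - α₀ ^ 2)) / D y
        ≤ A * Real.exp (-K * (y ^ 2 - α₀ ^ 2)) / D x :=
          div_le_div_of_nonneg_left (by positivity) (by linarith) hDy
      _ < A * Real.exp (-K * (x ^ 2 - α₀ ^ 2)) / D x :=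
          (div_lt_div_iff_of_pos_right (by linarith : (0:ℝ) < D x)).2
            (mul_lt_mul_of_pos_left hNlt hA)
  -- Part 2: tendsto 0
  have htend : Tendsto φ atTop (nhds 0) := by
    have h1 : Tendsto (fun ξ : ℝ => -K * (ξ ^ 2 - α₀ ^ 2)) atTop atBot := by
      have h2 : Tendsto (fun ξ : ℝ => -K * ξ ^ 2 + K * α₀ ^ 2) atTop atBot :=
        tendsto_atBot_add_const_right atTop _
          (Filter.Tendsto.const_mul_atTop_of_neg (by linarith) (tendsto_pow_atTop two_ne_zero))
      exact h2.congr (fun ξ => by ring)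
    have hb : Tendsto (fun ξ : ℝ => A * Real.exp (-K * (ξ ^ 2 - α₀ ^ 2))) atTop (nhds 0) := by
      have := (Real.tendsto_exp_atBot.comp h1).const_mul A
      simpa using this
    apply squeeze_zero' ?_ ?_ hb
    · filter_upwards [eventually_ge_atTop α₀] with ξ hξ
      exact div_nonneg (by positivity) (le_trans zero_le_one (hD1 hξ))
    · filter_upwards [eventually_ge_atTop α₀] with ξ hξ
      exact div_le_self (by positivity) (hD1 hξ)
  refine ⟨hanti, htend, fun hcond => ?_⟩
  -- Part 3: unique solution
  have hganti : StrictAntiOn (fun ξ => φ ξ - ξ ^ q) (Ici α₀) := by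
    intro x hx y hy hxy
    have h1 := hanti hx hy hxy
    have h2 : x ^ q < y ^ q :=
      Real.rpow_lt_rpow (le_trans hα₀.le hx) hxy hq
    simp only
    linarith
  have hφα₀ : φ α₀ = A := by
    simp only [hφ_def]
    simp
  -- pick R with φ R < R ^ q
  obtain ⟨R, ⟨hR1, hR2⟩, hR3⟩ : ∃ R : ℝ, (φ R < 1 ∧ (1:ℝ) ≤ R ^ q) ∧ α₀ < R := by
    have e1 : ∀ᶠ ξ : ℝ in atTop, φ ξ < 1 := htend.eventually (gt_mem_nhds one_pos)
    have e2 : ∀ᶠ ξ : ℝ in atTop, (1:ℝ) ≤ ξ ^ q := (tendsto_rpow_atTop hq).eventually_ge_atTop 1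
    exact ((e1.and e2).and (eventually_gt_atTop α₀)).exists
  have hgR : φ R - R ^ q < 0 := by linarith
  have hgα₀ : 0 < φ α₀ - α₀ ^ q := by rw [hφα₀]; linarith
  -- continuity of g on Icc α₀ R
  have hcont : ContinuousOn (fun ξ => φ ξ - ξ ^ q) (Icc α₀ R) := by
    have hnum : Continuous (fun ξ : ℝ => A * Real.exp (-K * (ξ ^ 2 - α₀ ^ 2))) := by
      fun_prop
    have hmap : MapsTo (fun ξ : ℝ => c * ξ ^ 2) (Icc α₀ R) (Icc 0 (c * R ^ 2)) := by
      intro ξ hξ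
      constructor
      · positivity
      · exact hsq hξ.1 hξ.2
    have hlg : ContinuousOn (fun ξ : ℝ => lowerGamma s (c * ξ ^ 2)) (Icc α₀ R) :=
      (lowerGamma_contOn s hs (c * R ^ 2)).comp (by fun_prop) hmap
    have hden : ContinuousOn D (Icc α₀ R) := by
      simp only [hD_def]
      exact continuousOn_const.add (continuousOn_const.mul (hlg.sub continuousOn_const))
    have hφc : ContinuousOn φ (Icc α₀ R) :=
      hnum.continuousOn.div hden (fun ξ hξ => (lt_of_lt_of_le one_pos (hD1 hξ.1)).ne')
    have hrp : ContinuousOn (fun ξ : ℝ => ξ ^ q) (Icc α₀ R) :=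
      continuousOn_id.rpow_const (fun ξ hξ => Or.inl (ne_of_gt (lt_of_lt_of_le hα₀ hξ.1)))
    exact hφc.sub hrp
  obtain ⟨ξ, hξmem, hξeq⟩ : ∃ ξ ∈ Ioo α₀ R, φ ξ - ξ ^ q = 0 := by
    have := intermediate_value_Ioo' hR3.le hcont (a := α₀) (b := R)
    have h0 : (0:ℝ) ∈ Ioo (φ R - R ^ q) (φ α₀ - α₀ ^ q) := ⟨hgR, hgα₀⟩
    obtain ⟨ξ, hξ, hξ0⟩ := this h0
    exact ⟨ξ, hξ, hξ0⟩
  refine ⟨ξ, ⟨hξmem.1, by linarith [sub_eq_zero.1 hξeq]⟩, ?_⟩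
  intro y ⟨hy1, hy2⟩
  have hyI : y ∈ Ici α₀ := le_of_lt (mem_Ioi.1 hy1)
  have hξI : ξ ∈ Ici α₀ := le_of_lt hξmem.1
  have hy2' : φ y = y ^ q := hy2
  have hgy : φ y - y ^ q = φ ξ - ξ ^ q := by rw [hy2', sub_self]; linarith [hξeq]
  exact hganti.injOn hyI hξI hgy

theorem stmt_17 (a ν α₀ p Ste alpha beta : ℝ)
    (ha : 0 < a) (hν0 : 0 < ν) (hν1 : ν < 1) (hα₀ : 0 < α₀)
    (hp : 0 ≤ p) (hSte : 0 < Ste) (halpha : 0 < alpha) (hbeta : 0 < beta) :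
    StrictAntiOn (phitc a ν α₀ p Ste alpha beta) (Ici α₀) ∧
    Tendsto (phitc a ν α₀ p Ste alpha beta) atTop (nhds 0) ∧
    (2 * α₀ < a * Ste →
      ∃! ξ : ℝ, ξ ∈ Ioi α₀ ∧ phitc a ν α₀ p Ste alpha beta ξ = ξ ^ (ν + 1)) := by
  have hα₀ν : 0 < α₀ ^ ν := Real.rpow_pos_of_pos hα₀ ν
  have hc : 0 < (1 + alpha) / (a * (1 + 2 * beta)) := div_pos (by linarith) (by nlinarith)
  have hK : 0 < (1 + alpha) / (a * (1 + beta)) := div_pos (by linarith) (by nlinarith)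
  have hA : 0 < a * α₀ ^ ν * Ste / 2 := by positivity
  have hM : 0 ≤ α₀ ^ ν * p / (2 * (1 + beta)) *
      Real.exp (((1 + alpha) / (a * (1 + 2 * beta))) * α₀ ^ 2) *
      ((1 + alpha) / (a * (1 + 2 * beta))) ^ ((ν - 1) / 2) := by
    have h1 : 0 ≤ α₀ ^ ν * p / (2 * (1 + beta)) := by positivity
    have h2 : 0 ≤ ((1 + alpha) / (a * (1 + 2 * beta))) ^ ((ν - 1) / 2) :=
      Real.rpow_nonneg hc.le _
    positivity
  have hs : 0 < (1 - ν) / 2 := by linarith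
  have key := aux_main (a * α₀ ^ ν * Ste / 2) ((1 + alpha) / (a * (1 + beta)))
      (α₀ ^ ν * p / (2 * (1 + beta)) *
        Real.exp (((1 + alpha) / (a * (1 + 2 * beta))) * α₀ ^ 2) *
        ((1 + alpha) / (a * (1 + 2 * beta))) ^ ((ν - 1) / 2))
      ((1 + alpha) / (a * (1 + 2 * beta))) ((1 - ν) / 2) α₀ (ν + 1)
      hA hK hM hc hs hα₀ (by linarith)
  refine ⟨key.1, key.2.1, fun hcond => ?_⟩
  apply key.2.2
  have h1 : α₀ ^ (ν + 1) = α₀ ^ ν * α₀ := by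
    rw [Real.rpow_add hα₀, Real.rpow_one]
  rw [h1]
  nlinarith
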